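/- arXiv:1806.07762 — 2 statements merged into one kernel-verified Lean document; each statement's English description precedes it below -/
import Mathlib

section
/- Let m be a nonnegative integer. Then (-1)^{m+1} · π^{2m+2}/(4·(2m+1)!) + Σ_{k=0}^{m} (-1)^k (1 + δ_k) · π^{2k}/(2k)! · λ(2m-2k+2) = 0, where δ_k = 1 if k = 0 and δ_k = 0 if k ≠ 0. -/
open Real Finset

/-- The Dirichlet lambda function at a natural-number argument `j`:
`λ(j) = ∑_{n=0}^∞ 1/(2n+1)^j`. -/
noncomputable def dirichletLambda (j : ℕ) : ℝ := ∑' n : ℕ, 1 / (2 * (n : ℝ) + 1) ^ j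

open PowerSeries


noncomputable def E2 : PowerSeries ℚ :=
  PowerSeries.C (R := ℚ) 2 * (rescale 2 (bernoulliPowerSeries ℚ) - bernoulliPowerSeries ℚ) + X

lemma coeff_E2 (n : ℕ) :
    coeff (R := ℚ) n E2 = 2 * ((2 ^ n - 1) * bernoulli n / n.factorial)
      + (if n = 1 then 1 else 0) := by
  simp [E2, coeff_C_mul, bernoulliPowerSeries, coeff_rescale, coeff_X]
  ring

lemma coeff_E2_odd {n : ℕ} (hn : Odd n) : coeff (R := ℚ) n E2 = 0 := by
  rcases eq_or_ne n 1 with rfl | h1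
  · simp [coeff_E2]
    norm_num
  · have hb : bernoulli n = 0 := by
      rw [bernoulli_eq_bernoulli'_of_ne_one h1]
      exact bernoulli'_eq_zero_of_odd hn (by rcases hn with ⟨k, rfl⟩; omega)
    simp [coeff_E2, hb, h1]

lemma master : (exp ℚ + 1) * E2 = X * (exp ℚ - 1) := by
  have hne : exp ℚ - 1 ≠ 0 := by
    intro h
    have := congrArg (coeff (R := ℚ) 1) h
    simp [coeff_exp] at this
  have h := bernoulliPowerSeries_mul_exp_sub_one ℚ
  have h2 := congrArg (rescale (2:ℚ)) h
  rw [map_mul, map_sub, map_one, rescale_X] at h2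
  have he2 : rescale (2:ℚ) (exp ℚ) = exp ℚ * exp ℚ := by
    have := exp_mul_exp_eq_exp_add (1:ℚ) 1
    norm_num [rescale_one] at this
    exact this.symm
  rw [he2] at h2
  have hC : (PowerSeries.C (R := ℚ)) 2 = 2 := map_ofNat _ 2
  rw [hC] at h2
  apply mul_left_cancel₀ hne
  rw [E2, hC]
  linear_combination 2 * h2 - (2 * exp ℚ + 2) * h

lemma E2_even : rescale (-1 : ℚ) E2 = E2 := by
  ext n
  rw [coeff_rescale]
  rcases Nat.even_or_odd n with he | ho
  · rw [he.neg_one_pow, one_mul]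
  · rw [coeff_E2_odd ho, mul_zero]

lemma master_neg :
    (rescale (-1:ℚ) (exp ℚ) + 1) * E2 = X * (1 - rescale (-1:ℚ) (exp ℚ)) := by
  have h := congrArg (rescale (-1:ℚ)) master
  rw [map_mul, map_mul, map_add, map_sub, map_one, rescale_X, E2_even] at h
  have hC : (PowerSeries.C (R := ℚ)) (-1) = -1 := by simp
  rw [hC] at h
  linear_combination h

lemma combined :
    (2 + exp ℚ + rescale (-1:ℚ) (exp ℚ)) * E2
      = X * (exp ℚ - rescale (-1:ℚ) (exp ℚ)) := by
  linear_combination master + master_neg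

lemma coeff_G (i : ℕ) :
    coeff (R := ℚ) i (2 + exp ℚ + rescale (-1:ℚ) (exp ℚ))
      = (if i = 0 then 2 else 0) + (1 + (-1)^i) / i.factorial := by
  have h2 : (2 : PowerSeries ℚ) = PowerSeries.C (R := ℚ) 2 := (map_ofNat _ 2).symm
  rw [map_add, map_add, h2, coeff_C, coeff_rescale, coeff_exp]
  simp [Algebra.algebraMap_self]
  split_ifs <;> ring

lemma sum_even_split (f : ℕ → ℚ) (hf : ∀ i, Odd i → f i = 0) (n : ℕ) :
    ∑ i ∈ range (2*n+1), f i = ∑ k ∈ range (n+1), f (2*k) := by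
  induction n with
  | zero => simp
  | succ n ih =>
    rw [show 2*(n+1)+1 = (2*n+1)+1+1 by omega, sum_range_succ, sum_range_succ,
      ih, hf (2*n+1) ⟨n, by omega⟩, sum_range_succ (fun k => f (2*k)) (n+1),
      sum_range_succ (fun k => f (2*k)) n, show 2*(n+1) = 2*n+2 by omega]
    ring

lemma bern_id (m : ℕ) :
    ∑ k ∈ range (m+1), (1 + if k = 0 then (1:ℚ) else 0) *
        ((2^(2*(m-k)+2) - 1) * bernoulli (2*(m-k)+2) /
          ((2*k).factorial * (2*(m-k)+2).factorial))
      = 1 / (2 * (2*m+1).factorial) := by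
  have hodd : ∀ i, Odd i →
      (fun i => coeff (R := ℚ) i (2 + exp ℚ + rescale (-1:ℚ) (exp ℚ)) *
        coeff (R := ℚ) (2*m+2-i) E2) i = 0 := by
    intro i hi
    rcases le_or_gt i (2*m+2) with hle | hgt
    · obtain ⟨t, rfl⟩ := hi
      have : Odd (2*m+2-(2*t+1)) := ⟨m - t, by omega⟩
      simp only
      rw [coeff_E2_odd this, mul_zero]
    · have h0 : 2*m+2-i = 0 := by omega
      simp only [h0, coeff_E2]
      norm_num
  have h := congrArg (coeff (R := ℚ) (2*m+2)) combined
  rw [coeff_mul, Finset.Nat.sum_antidiagonal_eq_sum_range_succ_mk] at h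
  simp only [Nat.succ_eq_add_one] at h
  rw [show 2*m+2+1 = 2*(m+1)+1 by omega,
    sum_even_split _ hodd (m+1), sum_range_succ] at h
  rw [show 2*m+2-2*(m+1) = 0 by omega] at h
  rw [show coeff (R := ℚ) 0 E2 = 0 by rw [coeff_E2]; norm_num, mul_zero, add_zero] at h
  rw [show 2*m+2 = (2*m+1)+1 by omega, coeff_succ_X_mul, map_sub, coeff_exp,
    coeff_rescale, coeff_exp] at h
  rw [show ((-1:ℚ))^(2*m+1) = -1 from (Odd.neg_one_pow ⟨m, by omega⟩)] at h
  simp only [Algebra.algebraMap_self, RingHom.id_apply] at h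
  have key : ∀ k ∈ range (m+1),
      (1 + if k = 0 then (1:ℚ) else 0) *
        ((2^(2*(m-k)+2) - 1) * bernoulli (2*(m-k)+2) /
          ((2*k).factorial * (2*(m-k)+2).factorial))
      = (1/4) * (coeff (R := ℚ) (2*k) (2 + exp ℚ + rescale (-1:ℚ) (exp ℚ)) *
          coeff (R := ℚ) (2*m+2-2*k) E2) := by
    intro k hk
    have hkm : k ≤ m := by simpa [Nat.lt_succ_iff] using hk
    rw [show 2*m+2-2*k = 2*(m-k)+2 by omega, coeff_G, coeff_E2]
    rw [show ((-1:ℚ))^(2*k) = 1 from Even.neg_one_pow ⟨k, by omega⟩]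
    rw [if_neg (by omega : ¬ 2*(m-k)+2 = 1)]
    have hf1 : (((2*k).factorial : ℚ)) ≠ 0 := by
      exact_mod_cast Nat.factorial_ne_zero _
    have hf2 : (((2*(m-k)+2).factorial : ℚ)) ≠ 0 := by
      exact_mod_cast Nat.factorial_ne_zero _
    rcases eq_or_ne k 0 with rfl | hk0
    · simp only [if_pos, mul_zero, Nat.factorial]
      norm_num
      field_simp
    · rw [if_neg hk0, if_neg (by omega : ¬ 2*k = 0)]
      field_simp
      ring
  rw [Finset.sum_congr rfl key, ← Finset.mul_sum, h]
  have hf3 : (((2*m+1).factorial : ℚ)) ≠ 0 := by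
    exact_mod_cast Nat.factorial_ne_zero _
  field_simp
  ring

lemma lambda_eq (i : ℕ) :
    dirichletLambda (2*(i+1)) = (-1:ℝ)^(i+1+1) * (2^(2*(i+1)) - 1) * π^(2*(i+1)) *
      (bernoulli (2*(i+1)) : ℝ) / (2 * (2*(i+1)).factorial) := by
  set j := i + 1 with hjdef
  set Z : ℝ := (-1:ℝ)^(j+1) * (2:ℝ)^(2*j-1) * π^(2*j) * (bernoulli (2*j) : ℝ)
    / (2*j).factorial with hZ
  have hz : HasSum (fun n : ℕ => 1 / (n:ℝ)^(2*j)) Z := hasSum_zeta_nat (by omega)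
  have hsum := hz.summable
  have he : HasSum (fun k : ℕ => 1 / ((2*(k:ℝ)))^(2*j)) ((1/2^(2*j)) * Z) := by
    have h' := hz.mul_left ((1:ℝ)/2^(2*j))
    have hfe : (fun n : ℕ => 1/2^(2*j) * (1/(n:ℝ)^(2*j)))
        = fun k : ℕ => 1/((2*(k:ℝ)))^(2*j) := by
      funext n
      rw [mul_pow, one_div_mul_one_div]
    exact hfe ▸ h'
  have ho : Summable (fun k : ℕ => 1 / (2*(k:ℝ)+1)^(2*j)) := by
    have hinj : Function.Injective (fun k : ℕ => 2*k+1) := fun a b hab => by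
      simpa using hab
    have := hsum.comp_injective hinj
    refine this.congr fun n => ?_
    simp only [Function.comp]
    push_cast
    ring
  have hes : Summable (fun k : ℕ => 1 / ((2*k : ℕ):ℝ)^(2*j)) := by
    refine he.summable.congr fun n => ?_
    push_cast
    ring
  have hos : Summable (fun k : ℕ => 1 / ((2*k+1 : ℕ):ℝ)^(2*j)) := by
    refine ho.congr fun n => ?_
    push_cast
    ring
  have ht := tsum_even_add_odd (f := fun n : ℕ => 1/(n:ℝ)^(2*j)) hes hos
  have h1 : ∑' (k:ℕ), 1/((2*k:ℕ):ℝ)^(2*j) = (1/2^(2*j)) * Z := by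
    rw [← he.tsum_eq]
    exact tsum_congr fun n => by push_cast; ring
  have h2 : dirichletLambda (2*j) = ∑' (k:ℕ), 1/((2*k+1:ℕ):ℝ)^(2*j) := by
    rw [dirichletLambda]
    exact tsum_congr fun n => by push_cast; ring
  rw [hz.tsum_eq, h1] at ht
  have hval : dirichletLambda (2*j) = Z - (1/2^(2*j))*Z := by
    rw [h2]
    linarith [ht]
  rw [hval, hZ, hjdef, show 2*(i+1)-1 = 2*i+1 by omega]
  have hF : (((2*(i+1)).factorial : ℝ)) ≠ 0 := by
    exact_mod_cast Nat.factorial_ne_zero _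
  field_simp
  ring

theorem lambda_recurrence_alpha_one (m : ℕ) :
    (-1 : ℝ) ^ (m + 1) * π ^ (2 * m + 2) / (4 * (Nat.factorial (2 * m + 1))) +
      ∑ k ∈ Finset.range (m + 1),
        (-1 : ℝ) ^ k * (1 + if k = 0 then (1 : ℝ) else 0) *
          (π ^ (2 * k) / (Nat.factorial (2 * k))) *
            dirichletLambda (2 * m - 2 * k + 2) = 0 := by
  have key : ∀ k ∈ Finset.range (m + 1),
      (-1 : ℝ) ^ k * (1 + if k = 0 then (1 : ℝ) else 0) *
          (π ^ (2 * k) / (Nat.factorial (2 * k))) *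
            dirichletLambda (2 * m - 2 * k + 2)
        = (-1:ℝ)^m * π^(2*m+2) / 2 *
            (((1 + if k = 0 then (1:ℚ) else 0) *
              ((2^(2*(m-k)+2) - 1) * bernoulli (2*(m-k)+2) /
                ((2*k).factorial * (2*(m-k)+2).factorial)) : ℚ) : ℝ) := by
    intro k hk
    have hkm : k ≤ m := by simpa [Nat.lt_succ_iff] using hk
    obtain ⟨d, rfl⟩ : ∃ d, m = k + d := ⟨m - k, by omega⟩
    rw [show 2*(k+d) - 2*k + 2 = 2*(d+1) by omega, show k+d-k = d by omega,
      lambda_eq d]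
    have hf1 : (((2*k).factorial : ℝ)) ≠ 0 := by
      exact_mod_cast Nat.factorial_ne_zero _
    have hf2 : (((2*d+2).factorial : ℝ)) ≠ 0 := by
      exact_mod_cast Nat.factorial_ne_zero _
    rw [show 2*(d+1) = 2*d+2 by omega]
    split_ifs with h0
    · subst h0
      push_cast
      field_simp
      ring
    · push_cast
      field_simp
      ring
  rw [Finset.sum_congr rfl key, ← Finset.mul_sum, ← Rat.cast_sum, bern_id m]
  have hf3 : (((2*m+1).factorial : ℝ)) ≠ 0 := by
    exact_mod_cast Nat.factorial_ne_zero _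
  push_cast
  field_simp
  ring
end

section
/- Let n be a positive integer and m a nonnegative integer. Then ((-1)^{m+1}/4) · ( 2·Σ_{j=1}^{n-1} (-1)^j j^{2m+1} + (-1)^n n^{2m+1} ) · π^{2m+2}/(2m+1)! + Σ_{k=0}^{m} (-1)^k ( (-1)^n n^{2k} - δ_k ) · π^{2k}/(2k)! · λ(2m-2k+2) = 0, where δ_k = 1 if k = 0 and δ_k = 0 otherwise, and 0^0 is interpreted as 1. -/
open Real Finset

section PowerSeriesPart

open Finset PowerSeries Nat

/-- `c j = (2^j - 1) B_j`. -/
def cQ (j : ℕ) : ℚ := (2 ^ j - 1) * bernoulli j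

lemma exp_sub_one_ne_zero' : exp ℚ - 1 ≠ 0 := by
  intro h
  have := congrArg (coeff (R := ℚ) 1) h
  simp [coeff_exp] at this

lemma E_mul_exp_add_one :
    (rescale (2 : ℚ) (bernoulliPowerSeries ℚ) - bernoulliPowerSeries ℚ) * (exp ℚ + 1) = -X := by
  have h1 : bernoulliPowerSeries ℚ * (exp ℚ - 1) = X := bernoulliPowerSeries_mul_exp_sub_one ℚ
  have h2 : rescale (2 : ℚ) (bernoulliPowerSeries ℚ) * (rescale (2:ℚ) (exp ℚ) - 1) = C (R := ℚ) 2 * X := by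
    have := congrArg (rescale (2 : ℚ)) h1
    rw [map_mul, map_sub, map_one, rescale_X] at this
    rw [this]
  have hexp2 : rescale (2 : ℚ) (exp ℚ) - 1 = (exp ℚ - 1) * (exp ℚ + 1) := by
    have h3 : rescale ((2:ℕ) : ℚ) (exp ℚ) = exp ℚ ^ 2 := (exp_pow_eq_rescale_exp 2).symm
    push_cast at h3
    rw [h3]; ring
  apply mul_right_cancel₀ exp_sub_one_ne_zero'
  have e1 : (rescale (2 : ℚ) (bernoulliPowerSeries ℚ) - bernoulliPowerSeries ℚ) * (exp ℚ + 1) *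
      (exp ℚ - 1) = rescale (2 : ℚ) (bernoulliPowerSeries ℚ) * ((exp ℚ - 1) * (exp ℚ + 1))
      - bernoulliPowerSeries ℚ * (exp ℚ - 1) * (exp ℚ + 1) := by ring
  rw [e1, ← hexp2, h2, h1]
  have : (C (R := ℚ) 2) * X = X + X := by
    have : (C (R := ℚ) 2) = 1 + 1 := by rw [map_ofNat]; norm_num
    rw [this]; ring
  rw [this]; ring

lemma coeff_E (n : ℕ) :
    coeff (R := ℚ) n (rescale (2 : ℚ) (bernoulliPowerSeries ℚ) - bernoulliPowerSeries ℚ)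
      = cQ n / n ! := by
  simp [bernoulliPowerSeries, coeff_rescale, cQ, eq_ratCast]
  ring

lemma sum_cQ (q : ℕ) :
    ∑ j ∈ range (q + 1), (q.choose j : ℚ) * cQ j + cQ q = if q = 1 then -1 else 0 := by
  have h := congrArg (coeff (R := ℚ) q) E_mul_exp_add_one
  rw [mul_add, mul_one, map_add, map_neg, coeff_X, coeff_mul] at h
  simp only [coeff_E, coeff_exp, eq_ratCast, Rat.cast_div, Rat.cast_one, Rat.cast_natCast] at h
  rw [Finset.Nat.sum_antidiagonal_eq_sum_range_succ_mk] at h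
  simp only at h
  have key : ∑ j ∈ range (q + 1), (q.choose j : ℚ) * cQ j
      = q ! * ∑ j ∈ range (q + 1), cQ j / j ! * (1 / (q - j)!) := by
    rw [mul_sum]
    refine Finset.sum_congr rfl fun j hj => ?_
    have hle : j ≤ q := Nat.lt_succ_iff.mp (mem_range.mp hj)
    rw [cast_choose ℚ hle]
    have h1 : (j ! : ℚ) ≠ 0 := by exact_mod_cast factorial_ne_zero j
    have h2 : ((q - j)! : ℚ) ≠ 0 := by exact_mod_cast factorial_ne_zero (q - j)
    field_simp
  have hq : (q ! : ℚ) ≠ 0 := by exact_mod_cast factorial_ne_zero q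
  have h' : ∑ j ∈ range (q + 1), cQ j / j ! * (1 / (q - j)!)
      = -(if q = 1 then 1 else 0) - cQ q / q ! := by
    rw [← h]; ring
  rw [key, h']
  rcases eq_or_ne q 1 with rfl | hne
  · simp [factorial]
  · simp only [hne, if_false]
    field_simp
    ring

end PowerSeriesPart

section RealPart

open Finset Nat

/-- `c j = (2^j - 1) B_j` as a real number. -/
noncomputable def cR (j : ℕ) : ℝ := (2 ^ j - 1) * (bernoulli j : ℝ)

noncomputable def G (j : ℕ) : ℝ := cR (2 * j) / (2 * j)!

lemma sum_cR (q : ℕ) :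
    ∑ j ∈ range (q + 1), (q.choose j : ℝ) * cR j + cR q = if q = 1 then -1 else 0 := by
  have := congrArg (Rat.cast : ℚ → ℝ) (sum_cQ q)
  simp only [cQ] at this
  push_cast at this
  rw [apply_ite (Rat.cast : ℚ → ℝ)] at this
  push_cast at this
  simpa [cR] using this

lemma sum_cR' (q : ℕ) :
    ∑ j ∈ range (q + 1), (q.choose j : ℝ) * cR (q - j)
      = (if q = 1 then -1 else 0) - cR q := by
  rw [← Finset.sum_range_reflect]
  have : ∀ j ∈ range (q + 1), ((q.choose (q + 1 - 1 - j)) : ℝ) * cR (q - (q + 1 - 1 - j))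
      = (q.choose j : ℝ) * cR j := by
    intro j hj
    have hle : j ≤ q := Nat.lt_succ_iff.mp (mem_range.mp hj)
    have h1 : q + 1 - 1 - j = q - j := by omega
    have h2 : q - (q - j) = j := by omega
    rw [h1, h2, Nat.choose_symm hle]
  rw [Finset.sum_congr rfl this]
  have := sum_cR q
  linarith

lemma Kident (p : ℕ) (x : ℝ) :
    ∑ i ∈ range (p + 1), (p.choose i : ℝ) * cR (p - i) * ((x + 1) ^ i + x ^ i)
      = -(p : ℝ) * x ^ (p - 1) := by
  have expand : ∀ i, (x + 1) ^ i = ∑ l ∈ range (i + 1), x ^ l * (i.choose l : ℝ) := by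
    intro i
    rw [add_pow]
    exact Finset.sum_congr rfl fun l _ => by rw [one_pow, mul_one]
  simp only [mul_add, Finset.sum_add_distrib, expand]
  have S1 : ∑ i ∈ range (p + 1), (p.choose i : ℝ) * cR (p - i)
        * ∑ l ∈ range (i + 1), x ^ l * (i.choose l : ℝ)
      = ∑ l ∈ range (p + 1), (p.choose l : ℝ) * x ^ l
          * ((if p - l = 1 then -1 else 0) - cR (p - l)) := by
    simp only [Finset.mul_sum]
    have swap := Finset.sum_Ico_Ico_comm 0 (p + 1)
      (fun l i => (p.choose i : ℝ) * cR (p - i) * (x ^ l * (i.choose l : ℝ)))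
    simp only [Nat.Ico_zero_eq_range] at swap
    rw [← swap]
    refine Finset.sum_congr rfl fun l hl => ?_
    have hlp : l ≤ p := Nat.lt_succ_iff.mp (mem_range.mp hl)
    have inner : ∀ i ∈ Finset.Ico l (p + 1),
        (p.choose i : ℝ) * cR (p - i) * (x ^ l * (i.choose l : ℝ))
          = (p.choose l : ℝ) * x ^ l * (((p - l).choose (i - l) : ℝ) * cR (p - l - (i - l))) := by
      intro i hi
      obtain ⟨hli, hip⟩ := Finset.mem_Ico.mp hi
      have hip' : i ≤ p := Nat.lt_succ_iff.mp hip
      have hchoose : (p.choose i : ℝ) * (i.choose l : ℝ)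
          = (p.choose l : ℝ) * ((p - l).choose (i - l) : ℝ) := by
        exact_mod_cast congrArg (Nat.cast : ℕ → ℝ) (Nat.choose_mul (n := p) hli)
      have harg : p - i = p - l - (i - l) := by omega
      rw [harg]
      calc (p.choose i : ℝ) * cR (p - l - (i - l)) * (x ^ l * (i.choose l : ℝ))
          = ((p.choose i : ℝ) * (i.choose l : ℝ)) * (x ^ l * cR (p - l - (i - l))) := by ring
        _ = ((p.choose l : ℝ) * ((p - l).choose (i - l) : ℝ))
              * (x ^ l * cR (p - l - (i - l))) := by rw [hchoose]
        _ = (p.choose l : ℝ) * x ^ l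
              * (((p - l).choose (i - l) : ℝ) * cR (p - l - (i - l))) := by ring
    rw [Finset.sum_congr rfl inner, ← Finset.mul_sum]
    congr 1
    rw [Finset.sum_Ico_eq_sum_range]
    simp only [Nat.add_sub_cancel_left]
    have : p + 1 - l = (p - l) + 1 := by omega
    rw [this]
    exact sum_cR' (p - l)
  rw [S1]
  simp only [mul_sub, Finset.sum_sub_distrib]
  have S2 : ∑ l ∈ range (p + 1), (p.choose l : ℝ) * x ^ l * cR (p - l)
      = ∑ i ∈ range (p + 1), (p.choose i : ℝ) * cR (p - i) * x ^ i := by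
    exact Finset.sum_congr rfl fun l _ => by ring
  rw [S2]
  have delta : ∑ l ∈ range (p + 1), (p.choose l : ℝ) * x ^ l * (if p - l = 1 then -1 else 0)
      = -(p : ℝ) * x ^ (p - 1) := by
    rcases Nat.eq_zero_or_pos p with rfl | hp
    · simp
    · rw [Finset.sum_eq_single (p - 1)]
      · have h1 : p - (p - 1) = 1 := by omega
        rw [h1, if_pos rfl]
        have h2 : p.choose (p - 1) = p := by
          rw [Nat.choose_symm (by omega)]
          simp [h1]
        rw [h2]; ring
      · intro l hl hne
        have : p - l ≠ 1 := by
          have := Nat.lt_succ_iff.mp (mem_range.mp hl); omega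
        rw [if_neg this, mul_zero]
      · intro h
        exact absurd (mem_range.mpr (by omega)) h
  calc ∑ l ∈ range (p + 1), (p.choose l : ℝ) * x ^ l * (if p - l = 1 then -1 else 0)
        - ∑ i ∈ range (p + 1), (p.choose i : ℝ) * cR (p - i) * x ^ i
        + ∑ i ∈ range (p + 1), (p.choose i : ℝ) * cR (p - i) * x ^ i
      = ∑ l ∈ range (p + 1), (p.choose l : ℝ) * x ^ l * (if p - l = 1 then -1 else 0) := by ring
    _ = -(p : ℝ) * x ^ (p - 1) := delta

lemma cR_zero : cR 0 = 0 := by simp [cR]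

lemma cR_one : cR 1 = -(1/2 : ℝ) := by
  simp [cR, bernoulli_one]
  norm_num

lemma cR_odd (j : ℕ) (hj : 1 ≤ j) : cR (2 * j + 1) = 0 := by
  have hodd : Odd (2 * j + 1) := ⟨j, by ring⟩
  have h1 : 1 < 2 * j + 1 := by omega
  have : bernoulli (2 * j + 1) = 0 := by
    rw [bernoulli_eq_bernoulli'_of_ne_one (by omega)]
    exact bernoulli'_eq_zero_of_odd hodd h1
  simp [cR, this]

lemma sum_range_two_mul (M : ℕ) (f : ℕ → ℝ) :
    ∑ i ∈ range (2 * M), f i = ∑ k ∈ range M, f (2 * k) + ∑ k ∈ range M, f (2 * k + 1) := by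
  induction M with
  | zero => simp
  | succ M ih =>
    have h : 2 * (M + 1) = 2 * M + 1 + 1 := by ring
    rw [h, Finset.sum_range_succ, Finset.sum_range_succ, Finset.sum_range_succ,
      Finset.sum_range_succ, ih]
    ring

lemma Keven (m : ℕ) (x : ℝ) :
    ∑ k ∈ range (m + 1), (((2 * m + 2).choose (2 * k)) : ℝ) * cR (2 * m + 2 - 2 * k)
        * ((x + 1) ^ (2 * k) + x ^ (2 * k))
      = ((m : ℝ) + 1) * ((x + 1) ^ (2 * m + 1) - x ^ (2 * m + 1)) := by
  have hK := Kident (2 * m + 2) x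
  rw [Finset.sum_range_succ] at hK
  have hz : ((2 * m + 2).choose (2 * m + 2) : ℝ) * cR (2 * m + 2 - (2 * m + 2))
      * ((x + 1) ^ (2 * m + 2) + x ^ (2 * m + 2)) = 0 := by
    have : 2 * m + 2 - (2 * m + 2) = 0 := by omega
    rw [this, cR_zero]; ring
  rw [hz, add_zero] at hK
  have h22 : range (2 * m + 2) = range (2 * (m + 1)) := by congr 1
  rw [h22, sum_range_two_mul (m + 1)
    (fun i => (((2 * m + 2).choose i) : ℝ) * cR (2 * m + 2 - i) * ((x + 1) ^ i + x ^ i))] at hK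
  have hodd : ∑ k ∈ range (m + 1), (((2 * m + 2).choose (2 * k + 1)) : ℝ)
      * cR (2 * m + 2 - (2 * k + 1)) * ((x + 1) ^ (2 * k + 1) + x ^ (2 * k + 1))
      = -((m : ℝ) + 1) * ((x + 1) ^ (2 * m + 1) + x ^ (2 * m + 1)) := by
    rw [Finset.sum_eq_single m]
    · have e1 : 2 * m + 2 - (2 * m + 1) = 1 := by omega
      have e2 : (2 * m + 2).choose (2 * m + 1) = 2 * m + 2 := by
        rw [show 2 * m + 1 = 2 * m + 2 - 1 by omega, Nat.choose_symm (by omega),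
          Nat.choose_one_right]
      rw [e1, e2, cR_one]
      push_cast
      ring
    · intro k hk hne
      have hk' : k < m := by
        have := Nat.lt_succ_iff.mp (mem_range.mp hk); omega
      have e : 2 * m + 2 - (2 * k + 1) = 2 * (m - k) + 1 := by omega
      rw [e, cR_odd (m - k) (by omega)]
      ring
    · intro h; exact absurd (mem_range.mpr (by omega)) h
  rw [hodd] at hK
  have hlast : 2 * m + 2 - 1 = 2 * m + 1 := by omega
  rw [hlast] at hK
  have := hK
  push_cast at this
  linarith [this]

lemma star (m : ℕ) (x : ℝ) :
    (x + 1) ^ (2 * m + 1) - x ^ (2 * m + 1)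
      = 2 * (2 * m + 1)! * (∑ k ∈ range (m + 1), (x + 1) ^ (2 * k) / (2 * k)! * G (m - k + 1)
          + ∑ k ∈ range (m + 1), x ^ (2 * k) / (2 * k)! * G (m - k + 1)) := by
  have hK := Keven m x
  have hterm : ∀ k ∈ range (m + 1),
      (((2 * m + 2).choose (2 * k)) : ℝ) * cR (2 * m + 2 - 2 * k)
        * ((x + 1) ^ (2 * k) + x ^ (2 * k))
      = (2 * m + 2)! * ((x + 1) ^ (2 * k) / (2 * k)! * G (m - k + 1)
          + x ^ (2 * k) / (2 * k)! * G (m - k + 1)) := by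
    intro k hk
    have hkm : k ≤ m := Nat.lt_succ_iff.mp (mem_range.mp hk)
    have h1 : 2 * k ≤ 2 * m + 2 := by omega
    have h2 : 2 * m + 2 - 2 * k = 2 * (m - k + 1) := by omega
    rw [Nat.cast_choose ℝ h1, h2]
    rw [G]
    have e3 : (2 * m + 2 - 2 * k) = 2 * (m - k + 1) := h2
    have hf1 : ((2 * k)! : ℝ) ≠ 0 := by exact_mod_cast factorial_ne_zero _
    have hf2 : ((2 * (m - k + 1))! : ℝ) ≠ 0 := by exact_mod_cast factorial_ne_zero _
    rw [← e3]
    field_simp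
  rw [Finset.sum_congr rfl hterm, ← Finset.mul_sum] at hK
  rw [Finset.sum_add_distrib] at hK
  have hfac : ((2 * m + 2)! : ℝ) = 2 * ((m : ℝ) + 1) * (2 * m + 1)! := by
    have : (2 * m + 2)! = (2 * m + 2) * (2 * m + 1)! := by
      rw [show 2 * m + 2 = (2 * m + 1) + 1 by omega]
      exact Nat.factorial_succ _
    rw [this]; push_cast; ring
  rw [hfac] at hK
  have hm1 : (m : ℝ) + 1 ≠ 0 := by positivity
  have goal2 : ((m : ℝ) + 1) * ((x + 1) ^ (2 * m + 1) - x ^ (2 * m + 1))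
      = ((m : ℝ) + 1) * (2 * (2 * m + 1)!
        * (∑ k ∈ range (m + 1), (x + 1) ^ (2 * k) / (2 * k)! * G (m - k + 1)
          + ∑ k ∈ range (m + 1), x ^ (2 * k) / (2 * k)! * G (m - k + 1))) := by
    rw [← hK]; ring
  exact mul_left_cancel₀ hm1 goal2

lemma Pmain (m n : ℕ) :
    (2 * ∑ j ∈ Finset.Icc 1 (n - 1), (-1 : ℝ) ^ j * (j : ℝ) ^ (2 * m + 1)
        + (-1 : ℝ) ^ n * (n : ℝ) ^ (2 * m + 1)) / (2 * (2 * m + 1)!) + G (m + 1)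
      = (-1 : ℝ) ^ n * ∑ k ∈ range (m + 1), (n : ℝ) ^ (2 * k) / (2 * k)! * G (m - k + 1) := by
  induction n with
  | zero =>
    have h0 : ∑ k ∈ range (m + 1), (0 : ℝ) ^ (2 * k) / (2 * k)! * G (m - k + 1)
        = G (m + 1) := by
      rw [Finset.sum_eq_single 0]
      · norm_num
      · intro k hk hne
        rw [zero_pow (by omega : 2 * k ≠ 0)]
        ring
      · intro h; exact absurd (mem_range.mpr (by omega)) h
    simp only [Nat.cast_zero, pow_zero, one_mul, h0]
    rw [show Finset.Icc 1 (0 - 1) = (∅ : Finset ℕ) by simp]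
    rw [zero_pow (by omega : 2 * m + 1 ≠ 0)]
    simp
  | succ n ih =>
    have hIcc : ∑ j ∈ Finset.Icc 1 (n + 1 - 1), (-1 : ℝ) ^ j * (j : ℝ) ^ (2 * m + 1)
        = ∑ j ∈ Finset.Icc 1 (n - 1), (-1 : ℝ) ^ j * (j : ℝ) ^ (2 * m + 1)
          + (-1 : ℝ) ^ n * (n : ℝ) ^ (2 * m + 1) := by
      rcases Nat.eq_zero_or_pos n with rfl | hn
      · simp [zero_pow (by omega : 2 * m + 1 ≠ 0)]
      · have h1 : n + 1 - 1 = n := by omega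
        rw [h1, show n = (n - 1) + 1 by omega, Finset.sum_Icc_succ_top (by omega)]
        rw [show n - 1 + 1 = n by omega]
    rw [hIcc]
    have hstar := star m (n : ℝ)
    have hcast : ((n : ℝ) + 1) = ((n + 1 : ℕ) : ℝ) := by push_cast; ring
    rw [hcast] at hstar
    have hstar2 : (((n + 1 : ℕ) : ℝ) ^ (2 * m + 1) - (n : ℝ) ^ (2 * m + 1)) / (2 * (2 * m + 1)!)
        = ∑ k ∈ range (m + 1), ((n + 1 : ℕ) : ℝ) ^ (2 * k) / (2 * k)! * G (m - k + 1)
          + ∑ k ∈ range (m + 1), (n : ℝ) ^ (2 * k) / (2 * k)! * G (m - k + 1) := by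
      rw [hstar]
      field_simp
    linear_combination ih + ((-1 : ℝ) ^ (n + 1)) * hstar2

end RealPart

section Lambda

open Finset Nat Real

lemma lambda_val (k : ℕ) (hk : k ≠ 0) :
    dirichletLambda (2 * k)
      = (-1 : ℝ) ^ (k + 1) * π ^ (2 * k) * cR (2 * k) / (2 * (2 * k)!) := by
  have h := hasSum_zeta_nat hk
  set Z : ℝ := (-1 : ℝ) ^ (k + 1) * (2 : ℝ) ^ (2 * k - 1) * π ^ (2 * k) *
      bernoulli (2 * k) / (2 * k)! with hZ
  have heven : HasSum (fun i : ℕ => 1 / (((2 * i : ℕ) : ℝ)) ^ (2 * k))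
      (((2:ℝ) ^ (2 * k))⁻¹ * Z) := by
    have h2 := h.mul_left ((2:ℝ) ^ (2 * k))⁻¹
    apply h2.congr_fun
    intro i
    push_cast
    rw [mul_pow, one_div, one_div, mul_inv]
  have hodd : Summable (fun i : ℕ => 1 / (((2 * i + 1 : ℕ) : ℝ)) ^ (2 * k)) :=
    h.summable.comp_injective fun a b hab => by omega
  have huniq := (HasSum.even_add_odd (f := fun n : ℕ => 1 / (n : ℝ) ^ (2 * k))
    heven hodd.hasSum).unique h
  have htsum : ∑' i : ℕ, 1 / (((2 * i + 1 : ℕ) : ℝ)) ^ (2 * k)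
      = Z - ((2:ℝ) ^ (2 * k))⁻¹ * Z := by
    linarith [huniq]
  have hdl : dirichletLambda (2 * k) = ∑' i : ℕ, 1 / (((2 * i + 1 : ℕ) : ℝ)) ^ (2 * k) := by
    unfold dirichletLambda
    congr 1
    funext i
    push_cast
    ring_nf
  rw [hdl, htsum, hZ, cR]
  have hpow : (2 : ℝ) ^ (2 * k - 1) = 2 ^ (2 * k) / 2 := by
    rw [eq_div_iff (two_ne_zero' ℝ), ← pow_succ]
    congr 1
    omega
  have hfac : ((2 * k)! : ℝ) ≠ 0 := by exact_mod_cast factorial_ne_zero _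
  rw [hpow]
  field_simp

end Lambda

open Nat in
theorem lambda_recurrence_integer_odd (n m : ℕ) (hn : 0 < n) :
    (-1 : ℝ) ^ (m + 1) / 4 *
        (2 * ∑ j ∈ Finset.Icc 1 (n - 1), (-1 : ℝ) ^ j * (j : ℝ) ^ (2 * m + 1) +
          (-1 : ℝ) ^ n * (n : ℝ) ^ (2 * m + 1)) * (π ^ (2 * m + 2) / (Nat.factorial (2 * m + 1))) +
      ∑ k ∈ Finset.range (m + 1),
        (-1 : ℝ) ^ k * ((-1 : ℝ) ^ n * (n : ℝ) ^ (2 * k) - if k = 0 then (1 : ℝ) else 0) *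
          (π ^ (2 * k) / (Nat.factorial (2 * k))) *
            dirichletLambda (2 * m - 2 * k + 2) = 0 := by
  have hterm : ∀ k ∈ range (m + 1),
      (-1 : ℝ) ^ k * ((-1 : ℝ) ^ n * (n : ℝ) ^ (2 * k) - if k = 0 then (1 : ℝ) else 0) *
          (π ^ (2 * k) / (Nat.factorial (2 * k))) * dirichletLambda (2 * m - 2 * k + 2)
        = (-1 : ℝ) ^ m * π ^ (2 * m + 2) / 2 *
            (((-1 : ℝ) ^ n * (n : ℝ) ^ (2 * k) - if k = 0 then (1 : ℝ) else 0) / (2 * k)!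
              * G (m - k + 1)) := by
    intro k hk
    have hkm : k ≤ m := Nat.lt_succ_iff.mp (mem_range.mp hk)
    have harg : 2 * m - 2 * k + 2 = 2 * (m - k + 1) := by omega
    rw [harg, lambda_val (m - k + 1) (by omega)]
    have hsign : (-1 : ℝ) ^ k * (-1 : ℝ) ^ (m - k + 1 + 1) = (-1 : ℝ) ^ m := by
      rw [← pow_add]
      have h4 : (-1 : ℝ) ^ (k + (m - k + 1 + 1)) = (-1 : ℝ) ^ (m + 2) := by
        congr 1
        omega
      rw [h4, pow_add]
      norm_num
    have hpi : π ^ (2 * k) * π ^ (2 * (m - k + 1)) = π ^ (2 * m + 2) := by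
      rw [← pow_add]
      congr 1
      omega
    rw [G]
    calc (-1 : ℝ) ^ k * ((-1 : ℝ) ^ n * (n : ℝ) ^ (2 * k) - if k = 0 then (1 : ℝ) else 0) *
          (π ^ (2 * k) / (2 * k)!) *
          ((-1 : ℝ) ^ (m - k + 1 + 1) * π ^ (2 * (m - k + 1)) * cR (2 * (m - k + 1))
            / (2 * (2 * (m - k + 1))!))
        = ((-1 : ℝ) ^ k * (-1 : ℝ) ^ (m - k + 1 + 1)) * (π ^ (2 * k) * π ^ (2 * (m - k + 1))) / 2
            * (((-1 : ℝ) ^ n * (n : ℝ) ^ (2 * k) - if k = 0 then (1 : ℝ) else 0) / (2 * k)!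
              * (cR (2 * (m - k + 1)) / (2 * (m - k + 1))!)) := by
          ring
      _ = (-1 : ℝ) ^ m * π ^ (2 * m + 2) / 2 *
            (((-1 : ℝ) ^ n * (n : ℝ) ^ (2 * k) - if k = 0 then (1 : ℝ) else 0) / (2 * k)!
              * (cR (2 * (m - k + 1)) / (2 * (m - k + 1))!)) := by
          rw [hsign, hpi]
  rw [Finset.sum_congr rfl hterm, ← Finset.mul_sum]
  have hsplit : ∑ k ∈ range (m + 1),
      (((-1 : ℝ) ^ n * (n : ℝ) ^ (2 * k) - if k = 0 then (1 : ℝ) else 0) / (2 * k)!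
        * G (m - k + 1))
      = (-1 : ℝ) ^ n * ∑ k ∈ range (m + 1), (n : ℝ) ^ (2 * k) / (2 * k)! * G (m - k + 1)
        - G (m + 1) := by
    have e1 : ∀ k ∈ range (m + 1),
        (((-1 : ℝ) ^ n * (n : ℝ) ^ (2 * k) - if k = 0 then (1 : ℝ) else 0) / (2 * k)!
          * G (m - k + 1))
        = (-1 : ℝ) ^ n * ((n : ℝ) ^ (2 * k) / (2 * k)! * G (m - k + 1))
          - (if k = 0 then (1 : ℝ) else 0) / (2 * k)! * G (m - k + 1) := by
      intro k _; ring
    rw [Finset.sum_congr rfl e1, Finset.sum_sub_distrib, ← Finset.mul_sum]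
    congr 1
    rw [Finset.sum_eq_single 0]
    · norm_num
    · intro k _ hne
      rw [if_neg hne]
      ring
    · intro h; exact absurd (mem_range.mpr (by omega)) h
  rw [hsplit]
  have hP := Pmain m n
  linear_combination ((-1 : ℝ) ^ (m + 1) * π ^ (2 * m + 2) / 2) * hP
end
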